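/- Opening a closed meander with N vertices into a lower rainbow meander with 2N vertices preserves the number of connected components: if the original meander has upper arch set A and lower arch set B on vertices {1,…,N}, then the meander on {1,…,2N} with upper arches A ∪ {(2N+1−i, 2N+1−j) : (i,j) ∈ B} and lower rainbow arches (i, 2N+1−i) has the same number of connected components. -/

import Mathlib

private lemma walk_const' {V : Type*} {β : Sort*} {G : SimpleGraph V} (f : V → β)
    (h : ∀ v w, G.Adj v w → f v = f w) : ∀ {a b : V}, G.Walk a b → f a = f b := by
  intro a b p
  induction p with
  | nil => rfl
  | cons hadj _ ih => exact (h _ _ hadj).trans ih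

/-- Opening a closed meander into a lower rainbow meander preserves the number
of connected components.  The closed meander on vertices `1,…,N` is given by an
upper matching involution `u` and a lower matching involution `l` (both
fixed-point free on `{1,…,N}`).  The opened meander on vertices `1,…,2N` has
upper arches `u` together with the reflected lower arches
`(2N+1−i, 2N+1−j)` for lower arches `(i,j)`, and lower arches the rainbow
`(i, 2N+1−i)`.  The two meanders have the same number of connected
components. -/
theorem opening_preserves_components (N : ℕ) (hN : 0 < N) (u l : ℕ → ℕ)
    (hu : ∀ i, 1 ≤ i → i ≤ N → 1 ≤ u i ∧ u i ≤ N ∧ u (u i) = i ∧ u i ≠ i)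
    (hl : ∀ i, 1 ≤ i → i ≤ N → 1 ≤ l i ∧ l i ≤ N ∧ l (l i) = i ∧ l i ≠ i) :
    Nat.card
      (SimpleGraph.fromRel (fun i j : Fin N =>
        u ((i : ℕ) + 1) = (j : ℕ) + 1 ∨ l ((i : ℕ) + 1) = (j : ℕ) + 1
        )).ConnectedComponent
    = Nat.card
      (SimpleGraph.fromRel (fun i j : Fin (2 * N) =>
        (if (i : ℕ) + 1 ≤ N then u ((i : ℕ) + 1)
          else 2 * N + 1 - l (2 * N + 1 - ((i : ℕ) + 1))) = (j : ℕ) + 1 ∨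
        2 * N + 1 - ((i : ℕ) + 1) = (j : ℕ) + 1
        )).ConnectedComponent := by
  classical
  set G : SimpleGraph (Fin N) := SimpleGraph.fromRel (fun i j : Fin N =>
        u ((i : ℕ) + 1) = (j : ℕ) + 1 ∨ l ((i : ℕ) + 1) = (j : ℕ) + 1) with hG
  set H : SimpleGraph (Fin (2 * N)) := SimpleGraph.fromRel (fun i j : Fin (2 * N) =>
        (if (i : ℕ) + 1 ≤ N then u ((i : ℕ) + 1)
          else 2 * N + 1 - l (2 * N + 1 - ((i : ℕ) + 1))) = (j : ℕ) + 1 ∨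
        2 * N + 1 - ((i : ℕ) + 1) = (j : ℕ) + 1) with hH
  let ι : Fin N → Fin (2 * N) := fun i => ⟨(i : ℕ), by omega⟩
  let ρ : Fin N → Fin (2 * N) := fun i => ⟨2 * N - 1 - (i : ℕ), by omega⟩
  let φ : Fin (2 * N) → Fin N := fun x =>
    if h : (x : ℕ) + 1 ≤ N then ⟨(x : ℕ), by omega⟩
    else ⟨2 * N - 1 - (x : ℕ), by have := x.2; omega⟩
  -- G-adjacency gives H-reachability of embedded vertices
  have key₁ : ∀ i j : Fin N,
      (u ((i : ℕ) + 1) = (j : ℕ) + 1 ∨ l ((i : ℕ) + 1) = (j : ℕ) + 1) → i ≠ j →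
      H.Reachable (ι i) (ι j) := by
    intro i j hrel hne
    have hi := i.2; have hj := j.2
    have hvne : (i : ℕ) ≠ (j : ℕ) := fun h => hne (Fin.ext h)
    rcases hrel with hrel | hrel
    · refine SimpleGraph.Adj.reachable ?_
      rw [hH, SimpleGraph.fromRel_adj]
      refine ⟨fun h => ?_, Or.inl (Or.inl ?_)⟩
      · have := congrArg Fin.val h
        simp only [ι] at this
        exact hvne this
      show (if (i : ℕ) + 1 ≤ N then u ((i : ℕ) + 1)
          else 2 * N + 1 - l (2 * N + 1 - ((i : ℕ) + 1))) = (j : ℕ) + 1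
      rw [if_pos (by omega)]
      exact hrel
    · have hla := hl ((i : ℕ) + 1) (by omega) (by omega)
      have h₁ : H.Adj (ι i) (ρ i) := by
        rw [hH, SimpleGraph.fromRel_adj]
        refine ⟨fun h => ?_, Or.inl (Or.inr ?_)⟩
        · have := congrArg Fin.val h
          simp only [ι, ρ] at this; omega
        · show 2 * N + 1 - ((i : ℕ) + 1) = 2 * N - 1 - (i : ℕ) + 1
          omega
      have h₂ : H.Adj (ρ i) (ρ j) := by
        rw [hH, SimpleGraph.fromRel_adj]
        refine ⟨fun h => ?_, Or.inl (Or.inl ?_)⟩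
        · have := congrArg Fin.val h
          simp only [ρ] at this; omega
        · show (if 2 * N - 1 - (i : ℕ) + 1 ≤ N then u (2 * N - 1 - (i : ℕ) + 1)
            else 2 * N + 1 - l (2 * N + 1 - (2 * N - 1 - (i : ℕ) + 1)))
            = 2 * N - 1 - (j : ℕ) + 1
          rw [if_neg (by omega)]
          have h1 : 2 * N + 1 - (2 * N - 1 - (i : ℕ) + 1) = (i : ℕ) + 1 := by omega
          rw [h1, hrel]
          omega
      have h₃ : H.Adj (ρ j) (ι j) := by
        rw [hH, SimpleGraph.fromRel_adj]
        refine ⟨fun h => ?_, Or.inl (Or.inr ?_)⟩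
        · have := congrArg Fin.val h
          simp only [ι, ρ] at this; omega
        · show 2 * N + 1 - (2 * N - 1 - (j : ℕ) + 1) = (j : ℕ) + 1
          omega
      exact (h₁.reachable.trans h₂.reachable).trans h₃.reachable
  have hGadj : ∀ i j : Fin N, G.Adj i j → H.Reachable (ι i) (ι j) := by
    intro i j hij
    rw [hG, SimpleGraph.fromRel_adj] at hij
    rcases hij with ⟨hne, hrel | hrel⟩
    · exact key₁ i j hrel hne
    · exact (key₁ j i hrel hne.symm).symm
  -- H-adjacency gives G-reachability of folded vertices
  have key₂ : ∀ x y : Fin (2 * N),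
      ((if (x : ℕ) + 1 ≤ N then u ((x : ℕ) + 1)
          else 2 * N + 1 - l (2 * N + 1 - ((x : ℕ) + 1))) = (y : ℕ) + 1 ∨
        2 * N + 1 - ((x : ℕ) + 1) = (y : ℕ) + 1) → x ≠ y →
      G.Reachable (φ x) (φ y) := by
    intro x y hrel hne
    have hx := x.2; have hy := y.2
    rcases hrel with hrel | hrel
    · by_cases hxN : (x : ℕ) + 1 ≤ N
      · rw [if_pos hxN] at hrel
        have hua := hu ((x : ℕ) + 1) (by omega) (by omega)
        have hyN : (y : ℕ) + 1 ≤ N := by omega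
        refine SimpleGraph.Adj.reachable ?_
        rw [hG, SimpleGraph.fromRel_adj]
        refine ⟨fun h => ?_, Or.inl (Or.inl ?_)⟩
        · have := congrArg Fin.val h
          simp only [φ, dif_pos hxN, dif_pos hyN] at this
          exact hne (Fin.ext this)
        · simp only [φ, dif_pos hxN, dif_pos hyN]
          exact hrel
      · rw [if_neg hxN] at hrel
        have ha : 1 ≤ 2 * N + 1 - ((x : ℕ) + 1) ∧ 2 * N + 1 - ((x : ℕ) + 1) ≤ N := by omega
        have hla := hl (2 * N + 1 - ((x : ℕ) + 1)) ha.1 ha.2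
        have hyN : ¬ ((y : ℕ) + 1 ≤ N) := by omega
        refine SimpleGraph.Adj.reachable ?_
        rw [hG, SimpleGraph.fromRel_adj]
        refine ⟨fun h => ?_, Or.inl (Or.inr ?_)⟩
        · have := congrArg Fin.val h
          simp only [φ, dif_neg hxN, dif_neg hyN] at this
          omega
        · simp only [φ, dif_neg hxN, dif_neg hyN]
          show l (2 * N - 1 - (x : ℕ) + 1) = 2 * N - 1 - (y : ℕ) + 1
          have h1 : 2 * N - 1 - (x : ℕ) + 1 = 2 * N + 1 - ((x : ℕ) + 1) := by omega
          rw [h1]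
          omega
    · -- rainbow arch: folded vertices coincide
      have : φ x = φ y := by
        by_cases hxN : (x : ℕ) + 1 ≤ N
        · have hyN : ¬ ((y : ℕ) + 1 ≤ N) := by omega
          simp only [φ, dif_pos hxN, dif_neg hyN, Fin.mk.injEq]
          omega
        · have hyN : (y : ℕ) + 1 ≤ N := by omega
          simp only [φ, dif_neg hxN, dif_pos hyN, Fin.mk.injEq]
          omega
      rw [this]
  have hHadj : ∀ x y : Fin (2 * N), H.Adj x y → G.Reachable (φ x) (φ y) := by
    intro x y hxy
    rw [hH, SimpleGraph.fromRel_adj] at hxy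
    rcases hxy with ⟨hne, hrel | hrel⟩
    · exact key₂ x y hrel hne
    · exact (key₂ y x hrel hne.symm).symm
  refine Nat.card_congr ?_
  refine
    { toFun := SimpleGraph.ConnectedComponent.lift
        (fun i => H.connectedComponentMk (ι i))
        (fun v w p _ => walk_const' _
          (fun a b hab => SimpleGraph.ConnectedComponent.sound (hGadj a b hab)) p)
      invFun := SimpleGraph.ConnectedComponent.lift
        (fun x => G.connectedComponentMk (φ x))
        (fun v w p _ => walk_const' _
          (fun a b hab => SimpleGraph.ConnectedComponent.sound (hHadj a b hab)) p)
      left_inv := ?_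
      right_inv := ?_ }
  · refine SimpleGraph.ConnectedComponent.ind fun i => ?_
    simp only [SimpleGraph.ConnectedComponent.lift_mk]
    congr 1
    have hiN : ((ι i : Fin (2 * N)) : ℕ) + 1 ≤ N := by
      have := i.2; simp only [ι]; omega
    simp only [φ, dif_pos hiN]
    rfl
  · refine SimpleGraph.ConnectedComponent.ind fun x => ?_
    simp only [SimpleGraph.ConnectedComponent.lift_mk]
    have hx := x.2
    by_cases hxN : (x : ℕ) + 1 ≤ N
    · congr 1
      simp only [φ, dif_pos hxN]
      rfl
    · refine SimpleGraph.ConnectedComponent.sound (SimpleGraph.Adj.reachable ?_)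
      rw [hH, SimpleGraph.fromRel_adj]
      refine ⟨fun h => ?_, Or.inr (Or.inr ?_)⟩
      · have := congrArg Fin.val h
        simp only [ι, φ, dif_neg hxN] at this
        omega
      · simp only [ι, φ, dif_neg hxN]
        show 2 * N + 1 - ((x : ℕ) + 1) = 2 * N - 1 - (x : ℕ) + 1
        omega
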